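/- Consider the two-state Markov chain on 𝕏 = {1,2} with transition probabilities P(X_{t+1}=1 | X_t=1) = P(X_{t+1}=2 | X_t=1) = 1/2 and P(X_{t+1}=2 | X_t=2) = 1, payoff f(x) = x, and discount function δ(0) := 1 and δ(k) := (7/12)(1−ε)^k for k ≥ 1, where ε ∈ (0, 1/13). Then both S = {2} and S = {1,2} are equilibria; in particular, there exist at least two distinct equilibria. -/

import Mathlib

open MeasureTheory ProbabilityTheory Set Filter Topology
open scoped ENNReal ENat

noncomputable section

/-- The σ-algebra generated by the first `n+1` coordinates of the path space:
the natural filtration of the coordinate process at time `n`. -/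
def pathSigma (𝕏 : Type*) [m : MeasurableSpace 𝕏] (n : ℕ) : MeasurableSpace (ℕ → 𝕏) :=
  ⨆ i ∈ Finset.range (n + 1), MeasurableSpace.comap (fun ω : ℕ → 𝕏 => ω i) m

/-- `Pr` is the family of laws of the time-homogeneous Markov chain with one-step
transition kernel `Q`: under `Pr x` the chain starts at `x`, and the Markov property
`Pr^x(X_{n+1} ∈ A | 𝓕_n) = Q(X_n, A)` holds. -/
structure IsMarkovChainLaw {𝕏 : Type*} [MeasurableSpace 𝕏]
    (Pr : Kernel 𝕏 (ℕ → 𝕏)) (Q : Kernel 𝕏 𝕏) : Prop where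
  start : ∀ x : 𝕏, Pr x {ω | ω 0 = x} = 1
  markov : ∀ (x : 𝕏) (n : ℕ) (B : Set (ℕ → 𝕏)), MeasurableSet[pathSigma 𝕏 n] B →
    ∀ A : Set 𝕏, MeasurableSet A →
      Pr x (B ∩ {ω | ω (n + 1) ∈ A}) = ∫⁻ ω in B, Q (ω n) A ∂(Pr x)

/-- The first hitting time `ρ(x,S) = inf {t ≥ 1 : X_t ∈ S}` along the path `ω`
(equal to `⊤` if `S` is never reached at a time `≥ 1`). -/
def hitTime {𝕏 : Type*} (S : Set 𝕏) (ω : ℕ → 𝕏) : ℕ∞ :=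
  sInf {n : ℕ∞ | ∃ t : ℕ, n = (t : ℕ∞) ∧ 1 ≤ t ∧ ω t ∈ S}

/-- The discounted payoff `δ(ρ(x,S)) f(X_{ρ(x,S)})` collected along the path `ω`,
with the convention that it vanishes when `S` is never hit. -/
def stopPayoff {𝕏 : Type*} (δ : ℕ → ℝ) (f : 𝕏 → ℝ) (S : Set 𝕏) (ω : ℕ → 𝕏) : ℝ :=
  if hitTime S ω = ⊤ then 0
  else δ (hitTime S ω).toNat * f (ω (hitTime S ω).toNat)

/-- The objective value `J(x, ρ(x,S)) = 𝔼^x[δ(ρ(x,S)) f(X_{ρ(x,S)})]`. -/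
def valJ {𝕏 : Type*} [MeasurableSpace 𝕏] (Pr : Kernel 𝕏 (ℕ → 𝕏)) (δ : ℕ → ℝ) (f : 𝕏 → ℝ)
    (S : Set 𝕏) (x : 𝕏) : ℝ :=
  ∫ ω, stopPayoff δ f S ω ∂(Pr x)

/-- The operator `Θ(S) = {x ∈ 𝕏 : f(x) ≥ J(x, ρ(x,S))}`. -/
def Θ {𝕏 : Type*} [MeasurableSpace 𝕏] (Pr : Kernel 𝕏 (ℕ → 𝕏)) (δ : ℕ → ℝ) (f : 𝕏 → ℝ)
    (S : Set 𝕏) : Set 𝕏 :=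
  {x | valJ Pr δ f S x ≤ f x}

/-- A Borel set `S ⊆ 𝕏` is an equilibrium if `Θ(S) = S`. -/
def IsEquilibrium {𝕏 : Type*} [MeasurableSpace 𝕏] (Pr : Kernel 𝕏 (ℕ → 𝕏)) (δ : ℕ → ℝ)
    (f : 𝕏 → ℝ) (S : Set 𝕏) : Prop :=
  MeasurableSet S ∧ Θ Pr δ f S = S

/-- The value `V(x,S) = max (f x) (J(x, ρ(x,S)))` associated with an equilibrium `S`. -/
def valV {𝕏 : Type*} [MeasurableSpace 𝕏] (Pr : Kernel 𝕏 (ℕ → 𝕏)) (δ : ℕ → ℝ) (f : 𝕏 → ℝ)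
    (S : Set 𝕏) (x : 𝕏) : ℝ :=
  max (f x) (valJ Pr δ f S x)

namespace TwoEq
lemma coord_meas {n i : ℕ} (hi : i ≤ n) (T : Set ℕ) :
    MeasurableSet[pathSigma ℕ n] ((fun ω : ℕ → ℕ => ω i) ⁻¹' T) := by
  have h : MeasurableSpace.comap (fun ω : ℕ → ℕ => ω i) inferInstance ≤ pathSigma ℕ n :=
    le_iSup₂ (f := fun i (_ : i ∈ Finset.range (n + 1)) =>
      MeasurableSpace.comap (fun ω : ℕ → ℕ => ω i) inferInstance) i
      (Finset.mem_range.2 (Nat.lt_succ_of_le hi))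
  exact h _ ⟨T, trivial, rfl⟩
lemma pathSigma_le (n : ℕ) : pathSigma ℕ n ≤ (inferInstance : MeasurableSpace (ℕ → ℕ)) :=
  iSup₂_le fun i _ => measurable_iff_comap_le.1 (measurable_pi_apply i)
lemma step (Pr : Kernel ℕ (ℕ → ℕ)) [IsMarkovKernel Pr] (Q : Kernel ℕ ℕ)
    (hchain : IsMarkovChainLaw Pr Q) (x c : ℕ) (n : ℕ) (B : Set (ℕ → ℕ))
    (hBm : MeasurableSet[pathSigma ℕ n] B) (hBc : ∀ ω ∈ B, ω n = c) (A : Set ℕ) :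
    Pr x (B ∩ {ω | ω (n + 1) ∈ A}) = Q c A * Pr x B := by
  rw [hchain.markov x n B hBm A trivial]
  rw [setLIntegral_congr_fun (pathSigma_le n _ hBm)
      (fun ω hω => by rw [hBc ω hω])]
  rw [setLIntegral_const]
lemma hitTime_eq {S : Set ℕ} {ω : ℕ → ℕ} {k : ℕ} (hk : 1 ≤ k) (hmem : ω k ∈ S)
    (hlt : ∀ t, 1 ≤ t → t < k → ω t ∉ S) : hitTime S ω = (k : ℕ∞) := by
  refine le_antisymm (sInf_le ⟨k, rfl, hk, hmem⟩) (le_sInf ?_)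
  rintro n ⟨t, rfl, ht1, htS⟩
  exact_mod_cast le_of_not_gt fun h => hlt t ht1 h htS
lemma stopPayoff_eq {δ : ℕ → ℝ} {f : ℕ → ℝ} {S : Set ℕ} {ω : ℕ → ℕ} {k : ℕ}
    (h : hitTime S ω = (k : ℕ∞)) : stopPayoff δ f S ω = δ k * f (ω k) := by
  rw [stopPayoff, h]; simp
lemma mem_ae (μ : Measure (ℕ → ℕ)) [IsProbabilityMeasure μ] {A : Set (ℕ → ℕ)}
    (hA : MeasurableSet A) (h : μ A = 1) : A ∈ ae μ := by
  rw [mem_ae_iff, measure_compl hA (measure_ne_top _ _), h, measure_univ, tsub_self]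

/-- paths staying at 1 up to time j -/
def Epath (j : ℕ) : Set (ℕ → ℕ) := {ω | ∀ i ≤ j, ω i = 1}
/-- paths staying at 1 up to time j, then jumping to 2 at time j+1 -/
def Dpath (j : ℕ) : Set (ℕ → ℕ) := Epath j ∩ {ω | ω (j + 1) ∈ ({2} : Set ℕ)}

lemma Epath_meas (j : ℕ) : MeasurableSet[pathSigma ℕ j] (Epath j) := by
  have h : Epath j = ⋂ (i : ℕ), ⋂ (_ : i ≤ j), (fun ω : ℕ → ℕ => ω i) ⁻¹' {1} := by
    ext ω; simp [Epath]
  rw [h]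
  exact MeasurableSet.iInter fun i => MeasurableSet.iInter fun hi => coord_meas hi _

lemma Dpath_meas (j : ℕ) : MeasurableSet (Dpath j) :=
  ((pathSigma_le j) _ (Epath_meas j)).inter ((measurable_pi_apply (j+1)) trivial)

lemma Q1_one (Q : Kernel ℕ ℕ)
    (hQ1 : Q 1 = (1 / 2 : ℝ≥0∞) • Measure.dirac 1 + (1 / 2 : ℝ≥0∞) • Measure.dirac 2) :
    Q 1 ({1} : Set ℕ) = 1 / 2 := by
  rw [hQ1]; simp [Measure.dirac_apply]

lemma Q1_two (Q : Kernel ℕ ℕ)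
    (hQ1 : Q 1 = (1 / 2 : ℝ≥0∞) • Measure.dirac 1 + (1 / 2 : ℝ≥0∞) • Measure.dirac 2) :
    Q 1 ({2} : Set ℕ) = 1 / 2 := by
  rw [hQ1]; simp [Measure.dirac_apply]

lemma Pr_Epath (Pr : Kernel ℕ (ℕ → ℕ)) [IsMarkovKernel Pr] (Q : Kernel ℕ ℕ)
    (hchain : IsMarkovChainLaw Pr Q)
    (hQ1 : Q 1 = (1 / 2 : ℝ≥0∞) • Measure.dirac 1 + (1 / 2 : ℝ≥0∞) • Measure.dirac 2)
    (j : ℕ) : Pr 1 (Epath j) = (1 / 2 : ℝ≥0∞) ^ j := by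
  induction j with
  | zero =>
    have h : Epath 0 = {ω : ℕ → ℕ | ω 0 = 1} := by
      ext ω; simp [Epath, Nat.le_zero]
    rw [h, hchain.start 1, pow_zero]
  | succ j ih =>
    have h : Epath (j + 1) = Epath j ∩ {ω | ω (j + 1) ∈ ({1} : Set ℕ)} := by
      ext ω
      constructor
      · intro hω
        exact ⟨fun i hi => hω i (hi.trans (Nat.le_succ j)), hω (j+1) le_rfl⟩
      · rintro ⟨h1, h2⟩ i hi
        rcases Nat.le_succ_iff.1 hi with hi' | hi'
        · exact h1 i hi'
        · rw [hi']; exact h2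
    rw [h, step Pr Q hchain 1 1 j _ (Epath_meas j) (fun ω hω => hω j le_rfl),
      Q1_one Q hQ1, ih, pow_succ]
    ring

lemma Pr_Dpath (Pr : Kernel ℕ (ℕ → ℕ)) [IsMarkovKernel Pr] (Q : Kernel ℕ ℕ)
    (hchain : IsMarkovChainLaw Pr Q)
    (hQ1 : Q 1 = (1 / 2 : ℝ≥0∞) • Measure.dirac 1 + (1 / 2 : ℝ≥0∞) • Measure.dirac 2)
    (j : ℕ) : Pr 1 (Dpath j) = (1 / 2 : ℝ≥0∞) ^ (j + 1) := by
  rw [Dpath, step Pr Q hchain 1 1 j _ (Epath_meas j) (fun ω hω => hω j le_rfl),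
    Q1_two Q hQ1, Pr_Epath Pr Q hchain hQ1 j, pow_succ]
  ring

lemma Dpath_disj : Pairwise (Function.onFun Disjoint Dpath) := by
  have key : ∀ i j : ℕ, i < j → Disjoint (Dpath i) (Dpath j) := by
    intro i j hij
    rw [Set.disjoint_left]
    rintro ω ⟨_, h2⟩ ⟨h1', _⟩
    have := h1' (i + 1) (Nat.succ_le_of_lt hij)
    simp only [Set.mem_setOf_eq, Set.mem_singleton_iff] at h2
    omega
  intro i j hij
  rcases lt_or_gt_of_ne hij with h | h
  · exact key i j h
  · exact (key j i h).symm

lemma hitTime_Dpath {ω : ℕ → ℕ} {j : ℕ} (hω : ω ∈ Dpath j) :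
    hitTime ({2} : Set ℕ) ω = ((j + 1 : ℕ) : ℕ∞) := by
  obtain ⟨h1, h2⟩ := hω
  refine hitTime_eq (Nat.succ_le_succ (Nat.zero_le j)) h2 ?_
  intro t ht1 htlt
  have := h1 t (Nat.lt_succ_iff.1 htlt)
  simp [this]

lemma tsum_half_pow : ∑' j : ℕ, (1 / 2 : ℝ≥0∞) ^ (j + 1) = 1 := by
  have h : ∀ j : ℕ, (1 / 2 : ℝ≥0∞) ^ (j + 1) = (1 / 2 : ℝ≥0∞) ^ j * (1 / 2) := fun j => pow_succ _ _
  rw [tsum_congr h, ENNReal.tsum_mul_right, ENNReal.tsum_geometric,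
    show (1 : ℝ≥0∞) - 1 / 2 = 1 / 2 by rw [one_div, ENNReal.one_sub_inv_two],
    one_div, inv_inv]
  exact ENNReal.mul_inv_cancel (by norm_num) (by norm_num)


lemma valJ_two (Pr : Kernel ℕ (ℕ → ℕ)) [IsMarkovKernel Pr] (Q : Kernel ℕ ℕ) [IsMarkovKernel Q]
    (hchain : IsMarkovChainLaw Pr Q) (hQ2 : Q 2 = Measure.dirac 2)
    (δ : ℕ → ℝ) (f : ℕ → ℝ) (S : Set ℕ) (h2S : 2 ∈ S) :
    valJ Pr δ f S 2 = δ 1 * f 2 := by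
  set B : Set (ℕ → ℕ) := (fun ω : ℕ → ℕ => ω 0) ⁻¹' {2} with hB
  have hBm : MeasurableSet[pathSigma ℕ 0] B := coord_meas le_rfl {2}
  set G : Set (ℕ → ℕ) := B ∩ {ω | ω (0 + 1) ∈ ({2} : Set ℕ)} with hG
  have hGval : Pr 2 G = 1 := by
    rw [hG, step Pr Q hchain 2 2 0 B hBm (fun ω hω => hω), hQ2]
    have hstart : Pr 2 B = 1 := hchain.start 2
    simp [hstart, Measure.dirac_apply]
  have hGm : MeasurableSet G :=
    ((pathSigma_le 0) _ hBm).inter ((measurable_pi_apply (0 + 1)) trivial)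
  have hae : stopPayoff δ f S =ᵐ[Pr 2] fun _ => δ 1 * f 2 := by
    refine eventuallyEq_of_mem (mem_ae (Pr 2) hGm hGval) fun ω hω => ?_
    have h1 : ω 1 = 2 := hω.2
    have hht : hitTime S ω = ((1 : ℕ) : ℕ∞) :=
      hitTime_eq le_rfl (by rw [h1]; exact h2S) (fun t ht1 htl => absurd (lt_of_le_of_lt ht1 htl) (lt_irrefl _))
    rw [stopPayoff_eq hht, h1]
  rw [valJ, integral_congr_ae hae, integral_const]
  simp

lemma valJ_one_12 (Pr : Kernel ℕ (ℕ → ℕ)) [IsMarkovKernel Pr] (Q : Kernel ℕ ℕ) [IsMarkovKernel Q]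
    (hchain : IsMarkovChainLaw Pr Q)
    (hQ1 : Q 1 = (1 / 2 : ℝ≥0∞) • Measure.dirac 1 + (1 / 2 : ℝ≥0∞) • Measure.dirac 2)
    (δ : ℕ → ℝ) :
    valJ Pr δ (fun y => (y : ℝ)) ({1, 2} : Set ℕ) 1 = (3 / 2) * δ 1 := by
  set B : Set (ℕ → ℕ) := (fun ω : ℕ → ℕ => ω 0) ⁻¹' {1} with hB
  have hBm : MeasurableSet[pathSigma ℕ 0] B := coord_meas le_rfl {1}
  set A1 : Set (ℕ → ℕ) := B ∩ {ω | ω (0 + 1) ∈ ({1} : Set ℕ)} with hA1def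
  set A2 : Set (ℕ → ℕ) := B ∩ {ω | ω (0 + 1) ∈ ({2} : Set ℕ)} with hA2def
  have hstart : Pr 1 B = 1 := hchain.start 1
  have hA1 : Pr 1 A1 = 1 / 2 := by
    rw [hA1def, step Pr Q hchain 1 1 0 B hBm (fun ω hω => hω), Q1_one Q hQ1,
      hstart, mul_one]
  have hA2 : Pr 1 A2 = 1 / 2 := by
    rw [hA2def, step Pr Q hchain 1 1 0 B hBm (fun ω hω => hω), Q1_two Q hQ1,
      hstart, mul_one]
  have hA1m : MeasurableSet A1 :=
    ((pathSigma_le 0) _ hBm).inter ((measurable_pi_apply (0 + 1)) trivial)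
  have hA2m : MeasurableSet A2 :=
    ((pathSigma_le 0) _ hBm).inter ((measurable_pi_apply (0 + 1)) trivial)
  have hdisj : Disjoint A1 A2 := by
    rw [Set.disjoint_left]
    rintro ω ⟨_, h1⟩ ⟨_, h2⟩
    simp only [Set.mem_setOf_eq, Set.mem_singleton_iff] at h1 h2
    omega
  have hU : Pr 1 (A1 ∪ A2) = 1 := by
    rw [measure_union hdisj hA2m, hA1, hA2, one_div, ENNReal.inv_two_add_inv_two]
  have hae : stopPayoff δ (fun y => (y : ℝ)) ({1, 2} : Set ℕ)
      =ᵐ[Pr 1] fun ω => A1.indicator (fun _ => δ 1 * 1) ω + A2.indicator (fun _ => δ 1 * 2) ω := by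
    refine eventuallyEq_of_mem (mem_ae (Pr 1) (hA1m.union hA2m) hU) fun ω hω => ?_
    rcases hω with hω | hω
    · have h1 : ω 1 = 1 := hω.2
      have hht : hitTime ({1, 2} : Set ℕ) ω = ((1 : ℕ) : ℕ∞) :=
        hitTime_eq le_rfl (by rw [h1]; exact Set.mem_insert 1 {2})
          (fun t ht1 htl => absurd (lt_of_le_of_lt ht1 htl) (lt_irrefl _))
      have hnot : ω ∉ A2 := fun h => by
        have h2 : ω 1 = 2 := h.2; omega
      rw [stopPayoff_eq hht, h1, Set.indicator_of_mem hω, Set.indicator_of_notMem hnot]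
      norm_num
    · have h1 : ω 1 = 2 := hω.2
      have hht : hitTime ({1, 2} : Set ℕ) ω = ((1 : ℕ) : ℕ∞) :=
        hitTime_eq le_rfl (by rw [h1]; exact Set.mem_insert_of_mem 1 rfl)
          (fun t ht1 htl => absurd (lt_of_le_of_lt ht1 htl) (lt_irrefl _))
      have hnot : ω ∉ A1 := fun h => by
        have h2 : ω 1 = 1 := h.2; omega
      rw [stopPayoff_eq hht, h1, Set.indicator_of_mem hω, Set.indicator_of_notMem hnot]
      norm_num
  rw [valJ, integral_congr_ae hae, integral_add
      ((integrable_const _).indicator hA1m) ((integrable_const _).indicator hA2m),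
    integral_indicator hA1m, integral_indicator hA2m, setIntegral_const, setIntegral_const,
    measureReal_def, measureReal_def, hA1, hA2]
  simp only [smul_eq_mul]
  rw [show ((1 / 2 : ℝ≥0∞)).toReal = (1 / 2 : ℝ) by simp]
  ring


lemma valJ_one_2 (Pr : Kernel ℕ (ℕ → ℕ)) [IsMarkovKernel Pr] (Q : Kernel ℕ ℕ) [IsMarkovKernel Q]
    (hchain : IsMarkovChainLaw Pr Q)
    (hQ1 : Q 1 = (1 / 2 : ℝ≥0∞) • Measure.dirac 1 + (1 / 2 : ℝ≥0∞) • Measure.dirac 2)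
    (δ : ℕ → ℝ) (hδbd : ∀ k : ℕ, ‖δ k * 2‖ ≤ 2) :
    valJ Pr δ (fun y => (y : ℝ)) ({2} : Set ℕ) 1
      = ∑' j : ℕ, ((1 / 2 : ℝ) ^ (j + 1) * (δ (j + 1) * 2)) := by
  have hUm : MeasurableSet (⋃ j, Dpath j) := MeasurableSet.iUnion fun j => Dpath_meas j
  have hU : Pr 1 (⋃ j, Dpath j) = 1 := by
    rw [measure_iUnion Dpath_disj fun j => Dpath_meas j,
      tsum_congr (fun j => Pr_Dpath Pr Q hchain hQ1 j), tsum_half_pow]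
  have hae : stopPayoff δ (fun y => (y : ℝ)) ({2} : Set ℕ)
      =ᵐ[Pr 1] fun ω => ∑' j : ℕ, (Dpath j).indicator (fun _ => δ (j + 1) * 2) ω := by
    refine eventuallyEq_of_mem (mem_ae (Pr 1) hUm hU) fun ω hω => ?_
    obtain ⟨j0, hj0⟩ := Set.mem_iUnion.1 hω
    have h2 : ω (j0 + 1) = 2 := hj0.2
    have hstop : stopPayoff (𝕏 := ℕ) δ (fun y => (y : ℝ)) ({2} : Set ℕ) ω = δ (j0 + 1) * 2 := by
      rw [stopPayoff_eq (hitTime_Dpath hj0), h2]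
      norm_num
    rw [hstop, tsum_eq_single j0 fun b hb =>
      Set.indicator_of_notMem (Set.disjoint_right.1 (Dpath_disj hb) hj0) _]
    rw [Set.indicator_of_mem hj0]
  rw [valJ, integral_congr_ae hae,
    integral_tsum (fun j => ((measurable_const.indicator (Dpath_meas j)).aestronglyMeasurable)) ?_]
  · refine tsum_congr fun j => ?_
    rw [integral_indicator (Dpath_meas j), setIntegral_const, measureReal_def, Pr_Dpath Pr Q hchain hQ1 j,
      smul_eq_mul]
    congr 1
    rw [ENNReal.toReal_pow]
    congr 1
    simp
  · have hle : ∀ j : ℕ, (∫⁻ ω, ‖(Dpath j).indicator (fun _ => δ (j + 1) * 2) ω‖₊ ∂(Pr 1))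
        ≤ 2 * (1 / 2 : ℝ≥0∞) ^ (j + 1) := by
      intro j
      have heq : ∀ ω, (‖(Dpath j).indicator (fun _ => δ (j + 1) * 2) ω‖₊ : ℝ≥0∞)
          = (Dpath j).indicator (fun _ => (‖δ (j + 1) * 2‖₊ : ℝ≥0∞)) ω := fun ω => by
        by_cases h : ω ∈ Dpath j <;> simp [h]
      rw [lintegral_congr heq, lintegral_indicator (Dpath_meas j), setLIntegral_const,
        Pr_Dpath Pr Q hchain hQ1 j]
      refine mul_le_mul_left ?_ _
      rw [← ENNReal.ofReal_coe_nnreal, coe_nnnorm]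
      calc ENNReal.ofReal ‖δ (j + 1) * 2‖ ≤ ENNReal.ofReal 2 :=
            ENNReal.ofReal_le_ofReal (hδbd (j + 1))
        _ = 2 := by norm_num
    refine ne_top_of_le_ne_top (by norm_num : (2 : ℝ≥0∞) ≠ ⊤) ?_
    calc ∑' j : ℕ, (∫⁻ ω, ‖(Dpath j).indicator (fun _ => δ (j + 1) * 2) ω‖₊ ∂(Pr 1))
        ≤ ∑' j : ℕ, 2 * (1 / 2 : ℝ≥0∞) ^ (j + 1) := ENNReal.tsum_le_tsum hle
      _ = 2 := by rw [ENNReal.tsum_mul_left, tsum_half_pow, mul_one]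


lemma sum_gt (ε : ℝ) (hε0 : 0 < ε) (hε1 : ε < 1 / 13) (δ : ℕ → ℝ)
    (hδ_pos : ∀ k : ℕ, 1 ≤ k → δ k = (7 / 12) * (1 - ε) ^ k) :
    (1 : ℝ) < ∑' j : ℕ, ((1 / 2 : ℝ) ^ (j + 1) * (δ (j + 1) * 2)) := by
  have h0 : (0 : ℝ) ≤ (1 - ε) / 2 := by linarith
  have h1 : (1 - ε) / 2 < 1 := by linarith
  have hcongr : ∀ j : ℕ, (1 / 2 : ℝ) ^ (j + 1) * (δ (j + 1) * 2)
      = (7 / 6) * ((1 - ε) / 2) ^ (j + 1) := fun j => by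
    rw [hδ_pos (j + 1) (Nat.le_add_left 1 j),
      show ((1 - ε) / 2 : ℝ) = (1 - ε) * (1 / 2) by ring, mul_pow]
    ring
  rw [tsum_congr hcongr, tsum_mul_left,
    tsum_congr (fun j => pow_succ' ((1 - ε) / 2) j), tsum_mul_left,
    tsum_geometric_of_lt_one h0 h1]
  have hne : (1 + ε) ≠ 0 := by positivity
  have key : (7 / 6 : ℝ) * ((1 - ε) / 2 * (1 - (1 - ε) / 2)⁻¹) = 7 * (1 - ε) / (6 * (1 + ε)) := by
    rw [show (1 - (1 - ε) / 2 : ℝ) = (1 + ε) / 2 by ring]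
    field_simp
  rw [key]
  exact (one_lt_div (by nlinarith)).2 (by nlinarith)

end TwoEq

/-- For the two-state chain on `{1, 2}` with `f(x) = x` and discount function
`δ(0) = 1`, `δ(k) = (7/12)(1−ε)^k` for `k ≥ 1` with `ε ∈ (0, 1/13)`, both `{2}` and
`{1,2}` are equilibria; in particular there are at least two distinct equilibria. -/
theorem two_equilibria_example
    (Pr : Kernel ℕ (ℕ → ℕ)) [IsMarkovKernel Pr] (Q : Kernel ℕ ℕ) [IsMarkovKernel Q]
    (hchain : IsMarkovChainLaw Pr Q)
    (hQ1 : Q 1 = (1 / 2 : ℝ≥0∞) • Measure.dirac 1 + (1 / 2 : ℝ≥0∞) • Measure.dirac 2)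
    (hQ2 : Q 2 = Measure.dirac 2)
    (ε : ℝ) (hε0 : 0 < ε) (hε1 : ε < 1 / 13)
    (δ : ℕ → ℝ) (hδ_zero : δ 0 = 1) (hδ_pos : ∀ k : ℕ, 1 ≤ k → δ k = (7 / 12) * (1 - ε) ^ k) :
    {x ∈ ({1, 2} : Set ℕ) | valJ Pr δ (fun y => (y : ℝ)) ({2} : Set ℕ) x ≤ (x : ℝ)}
        = ({2} : Set ℕ) ∧
    {x ∈ ({1, 2} : Set ℕ) | valJ Pr δ (fun y => (y : ℝ)) ({1, 2} : Set ℕ) x ≤ (x : ℝ)}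
        = ({1, 2} : Set ℕ) ∧
    ({2} : Set ℕ) ≠ ({1, 2} : Set ℕ) := by
  have hδbd : ∀ k : ℕ, ‖δ k * 2‖ ≤ 2 := by
    intro k
    rcases Nat.eq_zero_or_pos k with hk | hk
    · subst hk; rw [hδ_zero]; norm_num
    · rw [hδ_pos k hk, Real.norm_eq_abs, abs_le]
      have h1 : (0 : ℝ) ≤ 1 - ε := by linarith
      have h2 : (1 - ε) ^ k ≤ 1 := pow_le_one₀ h1 (by linarith)
      have h3 : (0 : ℝ) ≤ (1 - ε) ^ k := pow_nonneg h1 k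
      constructor <;> nlinarith
  have hδ1 : δ 1 = 7 / 12 * (1 - ε) := by rw [hδ_pos 1 le_rfl, pow_one]
  have hJ2_2 : valJ Pr δ (fun y => (y : ℝ)) ({2} : Set ℕ) 2 = δ 1 * 2 := by
    simpa using TwoEq.valJ_two Pr Q hchain hQ2 δ (fun y => (y : ℝ)) {2} rfl
  have hJ2_12 : valJ Pr δ (fun y => (y : ℝ)) ({1, 2} : Set ℕ) 2 = δ 1 * 2 := by
    simpa using TwoEq.valJ_two Pr Q hchain hQ2 δ (fun y => (y : ℝ)) {1, 2}
      (Set.mem_insert_of_mem 1 rfl)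
  have hJ1_12 : valJ Pr δ (fun y => (y : ℝ)) ({1, 2} : Set ℕ) 1 = (3 / 2) * δ 1 :=
    TwoEq.valJ_one_12 Pr Q hchain hQ1 δ
  have hJ1_2 : (1 : ℝ) < valJ Pr δ (fun y => (y : ℝ)) ({2} : Set ℕ) 1 := by
    rw [TwoEq.valJ_one_2 Pr Q hchain hQ1 δ hδbd]
    exact TwoEq.sum_gt ε hε0 hε1 δ hδ_pos
  have hbd2 : δ 1 * 2 ≤ 2 := by nlinarith
  refine ⟨?_, ?_, ?_⟩
  · ext x
    simp only [Set.mem_setOf_eq, Set.mem_insert_iff, Set.mem_singleton_iff]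
    constructor
    · rintro ⟨hx | hx, hle⟩
      · exfalso
        subst hx
        push_cast at hle
        linarith
      · exact hx
    · intro hx
      subst hx
      refine ⟨Or.inr rfl, ?_⟩
      push_cast
      linarith [hJ2_2]
  · ext x
    simp only [Set.mem_setOf_eq, Set.mem_insert_iff, Set.mem_singleton_iff]
    constructor
    · rintro ⟨hx, _⟩; exact hx
    · rintro (hx | hx) <;> subst hx
      · refine ⟨Or.inl rfl, ?_⟩
        push_cast
        rw [hJ1_12]
        nlinarith
      · refine ⟨Or.inr rfl, ?_⟩
        push_cast
        linarith [hJ2_12]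
  · intro h
    have h1 : (1 : ℕ) ∈ ({1, 2} : Set ℕ) := Set.mem_insert 1 {2}
    rw [← h] at h1
    simp only [Set.mem_singleton_iff] at h1
    omega


end
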